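/- Entropy conservation of the EC flux in the z-direction (appendix Corollary). Let left and right ideal MHD states be given (both with ρ > 0, p > 0) and define ρ̂ = ⟨z₁⟩z₅ˡⁿ, û₁ = ⟨z₂⟩/⟨z₁⟩, v̂₁ = ⟨z₃⟩/⟨z₁⟩, ŵ₁ = ⟨z₄⟩/⟨z₁⟩, p̂₁ = ⟨z₅⟩/⟨z₁⟩, p̂₂ = ((γ+1)/(2γ))·z₅ˡⁿ/z₁ˡⁿ + ((γ−1)/(2γ))·⟨z₅⟩/⟨z₁⟩, û₂ = ⟨z₁z₂⟩/⟨z₁²⟩, v̂₂ = ⟨z₁z₃⟩/⟨z₁²⟩, ŵ₂ = ⟨z₁z₄⟩/⟨z₁²⟩, B̂₁ = ⟨z₆⟩, B̂₂ = ⟨z₇⟩, B̂₃ = ⟨z₈⟩. Define h* ∈ ℝ⁸ by h₁* = ρ̂ŵ₁; h₂* = ρ̂û₁ŵ₁ − ⟨z₆z₈⟩; h₃* = ρ̂v̂₁ŵ₁ − ⟨z₇z₈⟩; h₄* = p̂₁ + ρ̂ŵ₁² + (⟨z₆²⟩+⟨z₇²⟩+⟨z₈²⟩)/2 − ⟨z₈²⟩;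 h₅* = γŵ₁p̂₂/(γ−1) + (ρ̂ŵ₁/2)(û₁²+v̂₁²+ŵ₁²) + ŵ₂B̂₁² − û₂B̂₁B̂₃ + ŵ₂B̂₂² − v̂₂B̂₂B̂₃; h₆* = ŵ₂B̂₁ − û₂B̂₃; h₇* = ŵ₂B̂₂ − v̂₂B̂₃; h₈* = 0. Then ⟦v⃗⟧·h* = ⟦ρw⟧ + ⟦ρw‖B⃗‖²/(2p)⟧ − ⟦ρB₃(u⃗·B⃗)/p⟧ + ⟦B₃⟧·(⟨z₁z₂⟩⟨z₆⟩ + ⟨z₁z₃⟩⟨z₇⟩ + ⟨z₁z₄⟩⟨z₈⟩), where the last term is minus the contribution of the paper's Janhunen source term discretization in the z-direction. -/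

import Mathlib

open Real Matrix

/-- An ideal MHD state: density, velocity components, pressure, magnetic field components. -/
structure MHD where
  ρ : ℝ
  u : ℝ
  v : ℝ
  w : ℝ
  p : ℝ
  B1 : ℝ
  B2 : ℝ
  B3 : ℝ

namespace MHD

noncomputable section

/-- ‖u⃗‖² -/
def uSq (S : MHD) : ℝ := S.u ^ 2 + S.v ^ 2 + S.w ^ 2

/-- ‖B⃗‖² -/
def BSq (S : MHD) : ℝ := S.B1 ^ 2 + S.B2 ^ 2 + S.B3 ^ 2

/-- u⃗·B⃗ -/
def uDotB (S : MHD) : ℝ := S.u * S.B1 + S.v * S.B2 + S.w * S.B3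

/-- physical entropy s = ln p − γ ln ρ -/
def ent (γ : ℝ) (S : MHD) : ℝ := Real.log S.p - γ * Real.log S.ρ

/-- total energy density ρe -/
def rhoE (γ : ℝ) (S : MHD) : ℝ := S.p / (γ - 1) + S.ρ * S.uSq / 2 + S.BSq / 2

/-- entropy density U = −ρs/(γ−1) -/
def entU (γ : ℝ) (S : MHD) : ℝ := -(S.ρ * S.ent γ) / (γ - 1)

/-- x-direction entropy flux F = uU -/
def entF (γ : ℝ) (S : MHD) : ℝ := S.u * S.entU γ

/-- the entropy variables v⃗ = U_q -/
def entVar (γ : ℝ) (S : MHD) : Fin 8 → ℝ :=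
  ![(γ - S.ent γ) / (γ - 1) - S.ρ * S.uSq / (2 * S.p),
    S.ρ * S.u / S.p, S.ρ * S.v / S.p, S.ρ * S.w / S.p,
    -(S.ρ / S.p), S.ρ * S.B1 / S.p, S.ρ * S.B2 / S.p, S.ρ * S.B3 / S.p]

/-- x-direction physical flux f⃗ -/
def fluxX (γ : ℝ) (S : MHD) : Fin 8 → ℝ :=
  ![S.ρ * S.u,
    S.ρ * S.u ^ 2 + S.p + S.BSq / 2 - S.B1 ^ 2,
    S.ρ * S.u * S.v - S.B1 * S.B2,
    S.ρ * S.u * S.w - S.B1 * S.B3,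
    S.u * (S.rhoE γ + S.p + S.BSq / 2) - S.B1 * S.uDotB,
    0,
    S.u * S.B2 - S.v * S.B1,
    S.u * S.B3 - S.w * S.B1]

/-- the parameter vector z -/
def z (S : MHD) : Fin 8 → ℝ :=
  ![Real.sqrt (S.ρ / S.p), Real.sqrt (S.ρ / S.p) * S.u, Real.sqrt (S.ρ / S.p) * S.v,
    Real.sqrt (S.ρ / S.p) * S.w, Real.sqrt (S.ρ * S.p), S.B1, S.B2, S.B3]

end

end MHD

noncomputable section

open MHD

/-- logarithmic mean: (x−y)/(ln x − ln y), with the consistent value x when x = y. -/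
def lm (x y : ℝ) : ℝ := if x = y then x else (x - y) / (Real.log x - Real.log y)

/-- arithmetic mean -/
def am (x y : ℝ) : ℝ := (x + y) / 2

/-- ⟨z_i⟩ (note: `zA L R 0` is ⟨z₁⟩, …, `zA L R 7` is ⟨z₈⟩) -/
def zA (L R : MHD) (i : Fin 8) : ℝ := am (L.z i) (R.z i)

/-- ⟨z_i z_j⟩ -/
def zP (L R : MHD) (i j : Fin 8) : ℝ := am (L.z i * L.z j) (R.z i * R.z j)

/-- ⟨z₁z₂⟩⟨z₆⟩ + ⟨z₁z₃⟩⟨z₇⟩ + ⟨z₁z₄⟩⟨z₈⟩, the x-direction source factor -/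
def srcX (L R : MHD) : ℝ :=
  zP L R 0 1 * zA L R 5 + zP L R 0 2 * zA L R 6 + zP L R 0 3 * zA L R 7

/-- the entropy conserving numerical flux of Theorem 1 (x-direction) -/
def ecFlux (γ : ℝ) (L R : MHD) : Fin 8 → ℝ :=
  ![zA L R 1 * lm (L.z 4) (R.z 4),
    zA L R 4 / zA L R 0 + (zA L R 1) ^ 2 * lm (L.z 4) (R.z 4) / zA L R 0
      + (zP L R 5 5 + zP L R 6 6 + zP L R 7 7) / 2 - zP L R 5 5,
    zA L R 1 * zA L R 2 * lm (L.z 4) (R.z 4) / zA L R 0 - zP L R 5 6,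
    zA L R 1 * zA L R 3 * lm (L.z 4) (R.z 4) / zA L R 0 - zP L R 5 7,
    (γ / (γ - 1)) * (zA L R 1 / zA L R 0) *
        (((γ + 1) / (2 * γ)) * lm (L.z 4) (R.z 4) / lm (L.z 0) (R.z 0)
          + ((γ - 1) / (2 * γ)) * (zA L R 4 / zA L R 0))
      + zA L R 1 * lm (L.z 4) (R.z 4) / 2 *
          ((zA L R 1) ^ 2 + (zA L R 2) ^ 2 + (zA L R 3) ^ 2) / (zA L R 0) ^ 2
      + (zA L R 6 / zP L R 0 0) * (zP L R 0 1 * zA L R 6 - zP L R 0 2 * zA L R 5)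
      + (zA L R 7 / zP L R 0 0) * (zP L R 0 1 * zA L R 7 - zP L R 0 3 * zA L R 5),
    0,
    (zP L R 0 1 * zA L R 6 - zP L R 0 2 * zA L R 5) / zP L R 0 0,
    (zP L R 0 1 * zA L R 7 - zP L R 0 3 * zA L R 5) / zP L R 0 0]

end

noncomputable section

open MHD

/-- the entropy conserving numerical flux in the y-direction (appendix Corollary) -/
def ecFluxY (γ : ℝ) (L R : MHD) : Fin 8 → ℝ :=
  let ρh := zA L R 0 * lm (L.z 4) (R.z 4)
  let u1 := zA L R 1 / zA L R 0
  let v1 := zA L R 2 / zA L R 0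
  let w1 := zA L R 3 / zA L R 0
  let p1 := zA L R 4 / zA L R 0
  let p2 := ((γ + 1) / (2 * γ)) * lm (L.z 4) (R.z 4) / lm (L.z 0) (R.z 0)
    + ((γ - 1) / (2 * γ)) * (zA L R 4 / zA L R 0)
  let u2 := zP L R 0 1 / zP L R 0 0
  let v2 := zP L R 0 2 / zP L R 0 0
  let w2 := zP L R 0 3 / zP L R 0 0
  let B1h := zA L R 5
  let B2h := zA L R 6
  let B3h := zA L R 7
  ![ρh * v1,
    ρh * u1 * v1 - zP L R 5 6,
    p1 + ρh * v1 ^ 2 + (zP L R 5 5 + zP L R 6 6 + zP L R 7 7) / 2 - zP L R 6 6,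
    ρh * v1 * w1 - zP L R 6 7,
    γ * v1 * p2 / (γ - 1) + (ρh * v1 / 2) * (u1 ^ 2 + v1 ^ 2 + w1 ^ 2)
      + v2 * B1h ^ 2 - u2 * B1h * B2h + v2 * B3h ^ 2 - w2 * B2h * B3h,
    v2 * B1h - u2 * B2h,
    0,
    v2 * B3h - w2 * B2h]

/-- the entropy conserving numerical flux in the z-direction (appendix Corollary) -/
def ecFluxZ (γ : ℝ) (L R : MHD) : Fin 8 → ℝ :=
  let ρh := zA L R 0 * lm (L.z 4) (R.z 4)
  let u1 := zA L R 1 / zA L R 0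
  let v1 := zA L R 2 / zA L R 0
  let w1 := zA L R 3 / zA L R 0
  let p1 := zA L R 4 / zA L R 0
  let p2 := ((γ + 1) / (2 * γ)) * lm (L.z 4) (R.z 4) / lm (L.z 0) (R.z 0)
    + ((γ - 1) / (2 * γ)) * (zA L R 4 / zA L R 0)
  let u2 := zP L R 0 1 / zP L R 0 0
  let v2 := zP L R 0 2 / zP L R 0 0
  let w2 := zP L R 0 3 / zP L R 0 0
  let B1h := zA L R 5
  let B2h := zA L R 6
  let B3h := zA L R 7
  ![ρh * w1,
    ρh * u1 * w1 - zP L R 5 7,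
    ρh * v1 * w1 - zP L R 6 7,
    p1 + ρh * w1 ^ 2 + (zP L R 5 5 + zP L R 6 6 + zP L R 7 7) / 2 - zP L R 7 7,
    γ * w1 * p2 / (γ - 1) + (ρh * w1 / 2) * (u1 ^ 2 + v1 ^ 2 + w1 ^ 2)
      + w2 * B1h ^ 2 - u2 * B1h * B3h + w2 * B2h ^ 2 - v2 * B2h * B3h,
    w2 * B1h - u2 * B3h,
    w2 * B2h - v2 * B3h,
    0]

end



lemma vec8eval (x0 x1 x2 x3 x4 x5 x6 x7 : ℝ) :
    (![x0,x1,x2,x3,x4,x5,x6,x7] : Fin 8 → ℝ) 0 = x0 ∧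
    (![x0,x1,x2,x3,x4,x5,x6,x7] : Fin 8 → ℝ) 1 = x1 ∧
    (![x0,x1,x2,x3,x4,x5,x6,x7] : Fin 8 → ℝ) 2 = x2 ∧
    (![x0,x1,x2,x3,x4,x5,x6,x7] : Fin 8 → ℝ) 3 = x3 ∧
    (![x0,x1,x2,x3,x4,x5,x6,x7] : Fin 8 → ℝ) 4 = x4 ∧
    (![x0,x1,x2,x3,x4,x5,x6,x7] : Fin 8 → ℝ) 5 = x5 ∧
    (![x0,x1,x2,x3,x4,x5,x6,x7] : Fin 8 → ℝ) 6 = x6 ∧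
    (![x0,x1,x2,x3,x4,x5,x6,x7] : Fin 8 → ℝ) 7 = x7 :=
  ⟨rfl, rfl, rfl, rfl, rfl, rfl, rfl, rfl⟩

lemma lm_pos' {x y : ℝ} (hx : 0 < x) (hy : 0 < y) : 0 < lm x y := by
  unfold lm
  split_ifs with h
  · exact hx
  · rcases lt_trichotomy x y with hlt | heq | hgt
    · have hl := Real.log_lt_log hx hlt
      exact div_pos_of_neg_of_neg (by linarith) (by linarith)
    · exact absurd heq h
    · have hl := Real.log_lt_log hy hgt
      exact div_pos (by linarith) (by linarith)

lemma lm_jump' {x y : ℝ} (hx : 0 < x) (hy : 0 < y) :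
    y - x = (Real.log y - Real.log x) * lm x y := by
  unfold lm
  split_ifs with h
  · rw [h]; ring
  · have hlog : Real.log x ≠ Real.log y := by
      intro hl
      exact h (Real.log_injOn_pos (Set.mem_Ioi.mpr hx) (Set.mem_Ioi.mpr hy) hl)
    have : Real.log x - Real.log y ≠ 0 := sub_ne_zero.mpr hlog
    field_simp
    ring


set_option maxHeartbeats 4000000 in
open MHD in
/-- entropy conservation of the EC flux in the z-direction:
⟦v⃗⟧·h* = ⟦ρw⟧ + ⟦ρw‖B⃗‖²/(2p)⟧ − ⟦ρB₃(u⃗·B⃗)/p⟧ + ⟦B₃⟧·(⟨z₁z₂⟩⟨z₆⟩ + ⟨z₁z₃⟩⟨z₇⟩ + ⟨z₁z₄⟩⟨z₈⟩). -/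
theorem ec_flux_entropy_conservation_z (γ : ℝ) (hγ : 1 < γ) (L R : MHD)
    (hρL : 0 < L.ρ) (hpL : 0 < L.p) (hρR : 0 < R.ρ) (hpR : 0 < R.p) :
    (∑ i : Fin 8, (R.entVar γ i - L.entVar γ i) * ecFluxZ γ L R i) =
      (R.ρ * R.w - L.ρ * L.w)
      + (R.ρ * R.w * R.BSq / (2 * R.p) - L.ρ * L.w * L.BSq / (2 * L.p))
      - (R.ρ * R.B3 * R.uDotB / R.p - L.ρ * L.B3 * L.uDotB / L.p)
      + (R.B3 - L.B3) * srcX L R := by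
  have hγ1 : γ - 1 ≠ 0 := by linarith
  have hγ0 : γ ≠ 0 := by linarith
  have ha1 : 0 < Real.sqrt (L.ρ / L.p) := Real.sqrt_pos.mpr (div_pos hρL hpL)
  have ha2 : 0 < Real.sqrt (R.ρ / R.p) := Real.sqrt_pos.mpr (div_pos hρR hpR)
  have he1 : 0 < Real.sqrt (L.ρ * L.p) := Real.sqrt_pos.mpr (mul_pos hρL hpL)
  have he2 : 0 < Real.sqrt (R.ρ * R.p) := Real.sqrt_pos.mpr (mul_pos hρR hpR)
  have hρ1 : Real.sqrt (L.ρ / L.p) * Real.sqrt (L.ρ * L.p) = L.ρ := by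
    rw [← Real.sqrt_mul (div_pos hρL hpL).le,
      show L.ρ / L.p * (L.ρ * L.p) = L.ρ ^ 2 by field_simp,
      Real.sqrt_sq hρL.le]
  have hρ2 : Real.sqrt (R.ρ / R.p) * Real.sqrt (R.ρ * R.p) = R.ρ := by
    rw [← Real.sqrt_mul (div_pos hρR hpR).le,
      show R.ρ / R.p * (R.ρ * R.p) = R.ρ ^ 2 by field_simp,
      Real.sqrt_sq hρR.le]
  have hp1 : Real.sqrt (L.ρ * L.p) / Real.sqrt (L.ρ / L.p) = L.p := by
    rw [div_eq_iff ha1.ne']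
    rw [show L.ρ * L.p = L.p ^ 2 * (L.ρ / L.p) by field_simp,
      Real.sqrt_mul (sq_nonneg _), Real.sqrt_sq hpL.le]
  have hp2 : Real.sqrt (R.ρ * R.p) / Real.sqrt (R.ρ / R.p) = R.p := by
    rw [div_eq_iff ha2.ne']
    rw [show R.ρ * R.p = R.p ^ 2 * (R.ρ / R.p) by field_simp,
      Real.sqrt_mul (sq_nonneg _), Real.sqrt_sq hpR.le]
  simp only [Fin.sum_univ_succ, Fin.sum_univ_zero, entVar, ecFluxZ, MHD.z, zA, zP, am, srcX, MHD.uSq,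
    MHD.BSq, MHD.uDotB, MHD.ent, Matrix.cons_val_zero, Matrix.cons_val_succ,
    Fin.succ_zero_eq_one, Matrix.cons_val_one, Matrix.head_cons, add_zero,
    (vec8eval _ _ _ _ _ _ _ _).1, (vec8eval _ _ _ _ _ _ _ _).2.1,
    (vec8eval _ _ _ _ _ _ _ _).2.2.1, (vec8eval _ _ _ _ _ _ _ _).2.2.2.1,
    (vec8eval _ _ _ _ _ _ _ _).2.2.2.2.1, (vec8eval _ _ _ _ _ _ _ _).2.2.2.2.2.1,
    (vec8eval _ _ _ _ _ _ _ _).2.2.2.2.2.2.1, (vec8eval _ _ _ _ _ _ _ _).2.2.2.2.2.2.2]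
  set a1 := Real.sqrt (L.ρ / L.p) with ha1d
  set a2 := Real.sqrt (R.ρ / R.p) with ha2d
  set e1 := Real.sqrt (L.ρ * L.p) with he1d
  set e2 := Real.sqrt (R.ρ * R.p) with he2d
  clear_value a1 a2 e1 e2
  rw [← hρ1, ← hρ2, ← hp1, ← hp2]
  rw [Real.log_div he1.ne' ha1.ne', Real.log_div he2.ne' ha2.ne',
    Real.log_mul ha1.ne' he1.ne', Real.log_mul ha2.ne' he2.ne']
  set M0 := lm a1 a2 with hM0d
  set M4 := lm e1 e2 with hM4d
  have hM0 : 0 < M0 := lm_pos' ha1 ha2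
  have hM4 : 0 < M4 := lm_pos' he1 he2
  have h0 : a2 - a1 = (Real.log a2 - Real.log a1) * M0 := lm_jump' ha1 ha2
  have h4 : e2 - e1 = (Real.log e2 - Real.log e1) * M4 := lm_jump' he1 he2
  clear_value M0 M4
  set La := Real.log a1 with hLad
  set Ra := Real.log a2 with hRad
  set Le := Real.log e1 with hLed
  set Re := Real.log e2 with hRed
  clear_value La Ra Le Re
  have hsum : a1 + a2 ≠ 0 := by positivity
  have hsq : a1 * a1 + a2 * a2 ≠ 0 := (add_pos (mul_pos ha1 ha1) (mul_pos ha2 ha2)).ne'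
  have hRa : Ra = La + (a2 - a1) / M0 := by
    rw [h0]; field_simp; ring
  have hRe : Re = Le + (e2 - e1) / M4 := by
    rw [h4]; field_simp; ring
  subst hRa hRe
  have hA : ((γ - (Le + (e2 - e1) / M4 - (La + (a2 - a1) / M0) - γ * (La + (a2 - a1) / M0 + (Le + (e2 - e1) / M4)))) / (γ - 1) - (γ - (Le - La - γ * (La + Le))) / (γ - 1)) * (((a1 + a2) / 2 * M4) * ((a1 * L.w + a2 * R.w) / 2 / ((a1 + a2) / 2))) + (-(a2 * e2 / (e2 / a2)) - -(a1 * e1 / (e1 / a1))) * (γ * ((a1 * L.w + a2 * R.w) / 2 / ((a1 + a2) / 2)) * ((γ + 1) / (2 * γ) * M4 / M0) / (γ - 1)) = (e2 - e1) * ((a1 * L.w + a2 * R.w) / 2) := by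
    field_simp
    ring
  have hBu : (a1 * e1 * L.u ^ 2 / (2 * (e1 / a1)) - a2 * e2 * R.u ^ 2 / (2 * (e2 / a2))) * (((a1 + a2) / 2 * M4) * ((a1 * L.w + a2 * R.w) / 2 / ((a1 + a2) / 2))) + (a2 * e2 * R.u / (e2 / a2) - a1 * e1 * L.u / (e1 / a1)) * (((a1 + a2) / 2 * M4) * ((a1 * L.u + a2 * R.u) / 2 / ((a1 + a2) / 2)) * ((a1 * L.w + a2 * R.w) / 2 / ((a1 + a2) / 2))) + (-(a2 * e2 / (e2 / a2)) - -(a1 * e1 / (e1 / a1))) * (((a1 + a2) / 2 * M4) * ((a1 * L.w + a2 * R.w) / 2 / ((a1 + a2) / 2)) / 2 * ((a1 * L.u + a2 * R.u) / 2 / ((a1 + a2) / 2)) ^ 2) = 0 := by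
    field_simp
    ring
  have hBv : (a1 * e1 * L.v ^ 2 / (2 * (e1 / a1)) - a2 * e2 * R.v ^ 2 / (2 * (e2 / a2))) * (((a1 + a2) / 2 * M4) * ((a1 * L.w + a2 * R.w) / 2 / ((a1 + a2) / 2))) + (a2 * e2 * R.v / (e2 / a2) - a1 * e1 * L.v / (e1 / a1)) * (((a1 + a2) / 2 * M4) * ((a1 * L.v + a2 * R.v) / 2 / ((a1 + a2) / 2)) * ((a1 * L.w + a2 * R.w) / 2 / ((a1 + a2) / 2))) + (-(a2 * e2 / (e2 / a2)) - -(a1 * e1 / (e1 / a1))) * (((a1 + a2) / 2 * M4) * ((a1 * L.w + a2 * R.w) / 2 / ((a1 + a2) / 2)) / 2 * ((a1 * L.v + a2 * R.v) / 2 / ((a1 + a2) / 2)) ^ 2) = 0 := by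
    field_simp
    ring
  have hBw : (a1 * e1 * L.w ^ 2 / (2 * (e1 / a1)) - a2 * e2 * R.w ^ 2 / (2 * (e2 / a2))) * (((a1 + a2) / 2 * M4) * ((a1 * L.w + a2 * R.w) / 2 / ((a1 + a2) / 2))) + (a2 * e2 * R.w / (e2 / a2) - a1 * e1 * L.w / (e1 / a1)) * (((a1 + a2) / 2 * M4) * ((a1 * L.w + a2 * R.w) / 2 / ((a1 + a2) / 2)) * ((a1 * L.w + a2 * R.w) / 2 / ((a1 + a2) / 2))) + (-(a2 * e2 / (e2 / a2)) - -(a1 * e1 / (e1 / a1))) * (((a1 + a2) / 2 * M4) * ((a1 * L.w + a2 * R.w) / 2 / ((a1 + a2) / 2)) / 2 * ((a1 * L.w + a2 * R.w) / 2 / ((a1 + a2) / 2)) ^ 2) = 0 := by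
    field_simp
    ring
  have hC : (a2 * e2 * R.w / (e2 / a2) - a1 * e1 * L.w / (e1 / a1)) * ((e1 + e2) / 2 / ((a1 + a2) / 2)) + (-(a2 * e2 / (e2 / a2)) - -(a1 * e1 / (e1 / a1))) * (γ * ((a1 * L.w + a2 * R.w) / 2 / ((a1 + a2) / 2)) * ((γ - 1) / (2 * γ) * ((e1 + e2) / 2 / ((a1 + a2) / 2))) / (γ - 1)) = a2 * e2 * R.w - a1 * e1 * L.w - (e2 - e1) * ((a1 * L.w + a2 * R.w) / 2) := by
    field_simp
    ring
  have key1 : (((γ - (Le + (e2 - e1) / M4 - (La + (a2 - a1) / M0) - γ * (La + (a2 - a1) / M0 + (Le + (e2 - e1) / M4)))) / (γ - 1) - a2 * e2 * (R.u ^ 2 + R.v ^ 2 + R.w ^ 2) / (2 * (e2 / a2)) - ((γ - (Le - La - γ * (La + Le))) / (γ - 1) - a1 * e1 * (L.u ^ 2 + L.v ^ 2 + L.w ^ 2) / (2 * (e1 / a1)))) * (((a1 + a2) / 2 * M4) * ((a1 * L.w + a2 * R.w) / 2 / ((a1 + a2) / 2)))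
      + (a2 * e2 * R.u / (e2 / a2) - a1 * e1 * L.u / (e1 / a1)) * (((a1 + a2) / 2 * M4) * ((a1 * L.u + a2 * R.u) / 2 / ((a1 + a2) / 2)) * ((a1 * L.w + a2 * R.w) / 2 / ((a1 + a2) / 2)))
      + (a2 * e2 * R.v / (e2 / a2) - a1 * e1 * L.v / (e1 / a1)) * (((a1 + a2) / 2 * M4) * ((a1 * L.v + a2 * R.v) / 2 / ((a1 + a2) / 2)) * ((a1 * L.w + a2 * R.w) / 2 / ((a1 + a2) / 2)))
      + (a2 * e2 * R.w / (e2 / a2) - a1 * e1 * L.w / (e1 / a1)) * (((e1 + e2) / 2 / ((a1 + a2) / 2)) + ((a1 + a2) / 2 * M4) * ((a1 * L.w + a2 * R.w) / 2 / ((a1 + a2) / 2)) ^ 2)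
      + (-(a2 * e2 / (e2 / a2)) - -(a1 * e1 / (e1 / a1))) * (γ * ((a1 * L.w + a2 * R.w) / 2 / ((a1 + a2) / 2)) * ((γ + 1) / (2 * γ) * M4 / M0 + (γ - 1) / (2 * γ) * ((e1 + e2) / 2 / ((a1 + a2) / 2))) / (γ - 1)
          + ((a1 + a2) / 2 * M4) * ((a1 * L.w + a2 * R.w) / 2 / ((a1 + a2) / 2)) / 2 * (((a1 * L.u + a2 * R.u) / 2 / ((a1 + a2) / 2)) ^ 2 + ((a1 * L.v + a2 * R.v) / 2 / ((a1 + a2) / 2)) ^ 2 + ((a1 * L.w + a2 * R.w) / 2 / ((a1 + a2) / 2)) ^ 2))) = (a2 * e2 * R.w - a1 * e1 * L.w) := by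
    linear_combination hA + hBu + hBv + hBw + hC
  have key2 : ((a2 * e2 * R.u / (e2 / a2) - a1 * e1 * L.u / (e1 / a1)) * (-((L.B1 * L.B3 + R.B1 * R.B3) / 2))
      + (a2 * e2 * R.v / (e2 / a2) - a1 * e1 * L.v / (e1 / a1)) * (-((L.B2 * L.B3 + R.B2 * R.B3) / 2))
      + (a2 * e2 * R.w / (e2 / a2) - a1 * e1 * L.w / (e1 / a1)) * (((L.B1 * L.B1 + R.B1 * R.B1) / 2 + (L.B2 * L.B2 + R.B2 * R.B2) / 2 + (L.B3 * L.B3 + R.B3 * R.B3) / 2) / 2 - (L.B3 * L.B3 + R.B3 * R.B3) / 2)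
      + (-(a2 * e2 / (e2 / a2)) - -(a1 * e1 / (e1 / a1))) * (((a1 * (a1 * L.w) + a2 * (a2 * R.w)) / 2 / ((a1 * a1 + a2 * a2) / 2)) * ((L.B1 + R.B1) / 2) ^ 2 - ((a1 * (a1 * L.u) + a2 * (a2 * R.u)) / 2 / ((a1 * a1 + a2 * a2) / 2)) * ((L.B1 + R.B1) / 2) * ((L.B3 + R.B3) / 2) + ((a1 * (a1 * L.w) + a2 * (a2 * R.w)) / 2 / ((a1 * a1 + a2 * a2) / 2)) * ((L.B2 + R.B2) / 2) ^ 2 - ((a1 * (a1 * L.v) + a2 * (a2 * R.v)) / 2 / ((a1 * a1 + a2 * a2) / 2)) * ((L.B2 + R.B2) / 2) * ((L.B3 + R.B3) / 2))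
      + (a2 * e2 * R.B1 / (e2 / a2) - a1 * e1 * L.B1 / (e1 / a1)) * (((a1 * (a1 * L.w) + a2 * (a2 * R.w)) / 2 / ((a1 * a1 + a2 * a2) / 2)) * ((L.B1 + R.B1) / 2) - ((a1 * (a1 * L.u) + a2 * (a2 * R.u)) / 2 / ((a1 * a1 + a2 * a2) / 2)) * ((L.B3 + R.B3) / 2))
      + (a2 * e2 * R.B2 / (e2 / a2) - a1 * e1 * L.B2 / (e1 / a1)) * (((a1 * (a1 * L.w) + a2 * (a2 * R.w)) / 2 / ((a1 * a1 + a2 * a2) / 2)) * ((L.B2 + R.B2) / 2) - ((a1 * (a1 * L.v) + a2 * (a2 * R.v)) / 2 / ((a1 * a1 + a2 * a2) / 2)) * ((L.B3 + R.B3) / 2))) = ((a2 * e2 * R.w * (R.B1 ^ 2 + R.B2 ^ 2 + R.B3 ^ 2) / (2 * (e2 / a2)) - a1 * e1 * L.w * (L.B1 ^ 2 + L.B2 ^ 2 + L.B3 ^ 2) / (2 * (e1 / a1)))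
      - (a2 * e2 * R.B3 * (R.u * R.B1 + R.v * R.B2 + R.w * R.B3) / (e2 / a2) - a1 * e1 * L.B3 * (L.u * L.B1 + L.v * L.B2 + L.w * L.B3) / (e1 / a1))
      + (R.B3 - L.B3) * ((a1 * (a1 * L.u) + a2 * (a2 * R.u)) / 2 * ((L.B1 + R.B1) / 2) + (a1 * (a1 * L.v) + a2 * (a2 * R.v)) / 2 * ((L.B2 + R.B2) / 2) + (a1 * (a1 * L.w) + a2 * (a2 * R.w)) / 2 * ((L.B3 + R.B3) / 2))) := by
    field_simp
    ring
  linear_combination key1 + key2
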